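/- (General decoupling lemma.) Let X_1,…,X_k be mutually independent random variables taking values in measurable spaces, and let X_1',…,X_k' be independent copies of X_1,…,X_k such that all 2k variables X_1,…,X_k,X_1',…,X_k' are mutually independent. Let E(·,…,·) be a measurable event in the k values. For each subset S ⊆ {1,…,k} define X_i^S := X_i if i ∈ S and X_i^S := X_i' if i ∉ S. Then P(E(X_1,…,X_k)) ≤ P( ⋀_{S ⊆ {1,…,k}} E(X_1^S,…,X_k^S) )^{1/2^k}. -/

import Mathlib

open MeasureTheory ProbabilityTheory
open scoped ENNReal

universe u


lemma my_sq_lintegral_le {α : Type*} [MeasurableSpace α] (μ : Measure α) [IsProbabilityMeasure μ]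
    {f : α → ℝ≥0∞} (hf : AEMeasurable f μ) :
    (∫⁻ a, f a ∂μ) ^ 2 ≤ ∫⁻ a, (f a) ^ 2 ∂μ := by
  have hpq : (2 : ℝ).HolderConjugate 2 := ⟨by norm_num, by norm_num, by norm_num⟩
  have h := ENNReal.lintegral_mul_le_Lp_mul_Lq μ hpq hf aemeasurable_const (g := fun _ => 1)
  simp only [mul_one, Pi.mul_apply, ENNReal.one_rpow, lintegral_one, measure_univ,
    ENNReal.one_rpow, one_mul] at h
  have h2 : (∫⁻ a, f a ∂μ) ≤ (∫⁻ a, f a ^ (2:ℝ) ∂μ) ^ ((1:ℝ)/2) := by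
    simpa using h
  calc (∫⁻ a, f a ∂μ) ^ 2 ≤ ((∫⁻ a, f a ^ (2:ℝ) ∂μ) ^ ((1:ℝ)/2)) ^ 2 := pow_le_pow_left' h2 2
    _ = ∫⁻ a, f a ^ 2 ∂μ := by
        rw [← ENNReal.rpow_natCast _ 2, ← ENNReal.rpow_mul]
        norm_num

lemma my_pow_lintegral_le {α : Type*} [MeasurableSpace α] (μ : Measure α) [IsProbabilityMeasure μ]
    {f : α → ℝ≥0∞} (hf : Measurable f) (n : ℕ) :
    (∫⁻ a, f a ∂μ) ^ (2 ^ n) ≤ ∫⁻ a, (f a) ^ (2 ^ n) ∂μ := by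
  induction n generalizing f with
  | zero => simp
  | succ n ih =>
    calc (∫⁻ a, f a ∂μ) ^ 2 ^ (n+1) = ((∫⁻ a, f a ∂μ) ^ 2) ^ 2 ^ n := by
          rw [← pow_mul, pow_succ, mul_comm]
      _ ≤ (∫⁻ a, (f a) ^ 2 ∂μ) ^ 2 ^ n := pow_le_pow_left' (my_sq_lintegral_le μ hf.aemeasurable) _
      _ ≤ ∫⁻ a, ((f a) ^ 2) ^ 2 ^ n ∂μ := ih (hf.pow_const 2)
      _ = ∫⁻ a, (f a) ^ 2 ^ (n+1) ∂μ := by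
          simp_rw [← pow_mul, pow_succ, mul_comm]

lemma my_measurePreserving_pppc {α β γ δ : Type*} [MeasurableSpace α] [MeasurableSpace β]
    [MeasurableSpace γ] [MeasurableSpace δ]
    (μa : Measure α) (μb : Measure β) (μc : Measure γ) (μd : Measure δ)
    [SFinite μa] [SFinite μb] [SFinite μc] [SFinite μd] :
    MeasurePreserving (fun q : (α × β) × (γ × δ) => ((q.1.1, q.2.1), (q.1.2, q.2.2)))
      ((μa.prod μb).prod (μc.prod μd)) ((μa.prod μc).prod (μb.prod μd)) := by
  have hg : MeasurePreserving
      (fun r : β × (γ × δ) => (r.2.1, (r.1, r.2.2)))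
      (μb.prod (μc.prod μd)) (μc.prod (μb.prod μd)) := by
    have h1 := (measurePreserving_prodAssoc μb μc μd).symm MeasurableEquiv.prodAssoc
    have h2 := (Measure.measurePreserving_swap (μ := μb) (ν := μc)).prod (MeasurePreserving.id μd)
    have h3 := measurePreserving_prodAssoc μc μb μd
    exact h3.comp (h2.comp h1)
  have h1 := measurePreserving_prodAssoc μa μb (μc.prod μd)
  have h2 := (MeasurePreserving.id μa).prod hg
  have h3 := (measurePreserving_prodAssoc μa μc (μb.prod μd)).symm MeasurableEquiv.prodAssoc
  exact h3.comp (h2.comp h1)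

lemma my_meas_cons {k : ℕ} {S : Fin (k + 1) → Type u} [∀ i, MeasurableSpace (S i)]
    {β : Type*} [MeasurableSpace β] {h : β → S 0} {t : ∀ j : Fin k, β → S j.succ}
    (hh : Measurable h) (ht : ∀ j, Measurable (t j)) :
    Measurable (fun b => (Fin.cons (h b) (fun j => t j b) : ∀ i, S i)) := by
  apply measurable_pi_lambda
  intro i
  refine Fin.cases ?_ (fun j => ?_) i
  · simpa using hh
  · simpa using ht j

lemma my_split_iff {k : ℕ} {S : Fin (k + 1) → Type u} (E : Set (∀ i, S i)) (f g : ∀ i, S i) :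
    (∀ s : Finset (Fin (k + 1)), (fun i => if i ∈ s then f i else g i) ∈ E) ↔
      ∀ t : Finset (Fin k),
        (Fin.cons (f 0) (fun j => if j ∈ t then f j.succ else g j.succ) : ∀ i, S i) ∈ E ∧
        (Fin.cons (g 0) (fun j => if j ∈ t then f j.succ else g j.succ) : ∀ i, S i) ∈ E := by
  classical
  have key : ∀ s : Finset (Fin (k + 1)),
      (fun i => if i ∈ s then f i else g i) =
        (Fin.cons (if 0 ∈ s then f 0 else g 0)
          (fun j => if j.succ ∈ s then f j.succ else g j.succ) : ∀ i, S i) := by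
    intro s; funext i
    refine Fin.cases ?_ (fun j => ?_) i
    · simp
    · simp
  constructor
  · intro h t
    constructor
    · have := h (insert 0 (t.map ⟨Fin.succ, Fin.succ_injective k⟩))
      rw [key] at this
      simpa [Finset.mem_insert, Finset.mem_map, Fin.succ_ne_zero, Fin.succ_inj] using this
    · have := h (t.map ⟨Fin.succ, Fin.succ_injective k⟩)
      rw [key] at this
      simpa [Finset.mem_map, Fin.succ_ne_zero, Fin.succ_inj] using this
  · intro h s
    rw [key s]
    by_cases h0 : (0 : Fin (k + 1)) ∈ s
    · have := (h (s.preimage Fin.succ (Fin.succ_injective k).injOn)).1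
      simpa [Finset.mem_preimage, h0] using this
    · have := (h (s.preimage Fin.succ (Fin.succ_injective k).injOn)).2
      simpa [Finset.mem_preimage, h0] using this

lemma my_cons_self {k : ℕ} {S : Fin (k + 1) → Type u} (f : ∀ i, S i) :
    (Fin.cons (f 0) (fun j => f j.succ) : ∀ i, S i) = f := by
  funext i
  refine Fin.cases ?_ (fun j => ?_) i <;> simp

theorem my_core :
    ∀ (k : ℕ) (S : Fin k → Type u) [inst : ∀ i, MeasurableSpace (S i)]
      (ν : ∀ i, Measure (S i)) [hν : ∀ i, IsProbabilityMeasure (ν i)]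
      (E : Set (∀ i, S i)), MeasurableSet E →
      Measure.pi ν E ^ 2 ^ k ≤
        ((Measure.pi ν).prod (Measure.pi ν))
          {p : (∀ i, S i) × (∀ i, S i) |
            ∀ s : Finset (Fin k), (fun i => if i ∈ s then p.1 i else p.2 i) ∈ E} := by
  intro k
  induction k with
  | zero =>
    intro S inst ν hν E hE
    have hfun : ∀ (p : (∀ i, S i) × (∀ i, S i)) (s : Finset (Fin 0)),
        (fun i => if i ∈ s then p.1 i else p.2 i) = p.1 := fun p s => funext fun i => i.elim0
    have hset : {p : (∀ i, S i) × (∀ i, S i) |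
        ∀ s : Finset (Fin 0), (fun i => if i ∈ s then p.1 i else p.2 i) ∈ E}
        = E ×ˢ (Set.univ : Set (∀ i, S i)) := by
      ext p
      simp only [Set.mem_setOf_eq, Set.mem_prod, Set.mem_univ, and_true]
      constructor
      · intro h; have := h ∅; rwa [hfun] at this
      · intro h s; rw [hfun]; exact h
    rw [hset, Measure.prod_prod, measure_univ, mul_one, pow_zero, pow_one]
  | succ k ih =>
    intro S inst ν hν E hE
    classical
    haveI : ∀ j : Fin k, IsProbabilityMeasure (ν j.succ) := fun j => hν _
    -- measurable sets
    have hV : MeasurableSet {p : S 0 × (∀ j : Fin k, S j.succ) |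
        (Fin.cons p.1 p.2 : ∀ i, S i) ∈ E} :=
      my_meas_cons measurable_fst (fun j => (measurable_pi_apply j).comp measurable_snd) hE
    have hmixmeas : ∀ (t : Finset (Fin k)) (j : Fin k),
        Measurable (fun w : (∀ j : Fin k, S j.succ) × (∀ j : Fin k, S j.succ) =>
          if j ∈ t then w.1 j else w.2 j) := by
      intro t j
      by_cases hj : j ∈ t
      · simp only [hj, ↓reduceIte]; exact (measurable_pi_apply j).comp measurable_fst
      · simp only [hj, ↓reduceIte]; exact (measurable_pi_apply j).comp measurable_snd
    have hW : MeasurableSet {q : S 0 × ((∀ j : Fin k, S j.succ) × (∀ j : Fin k, S j.succ)) |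
        ∀ t : Finset (Fin k),
          (Fin.cons q.1 (fun j => if j ∈ t then q.2.1 j else q.2.2 j) : ∀ i, S i) ∈ E} := by
      have heq : {q : S 0 × ((∀ j : Fin k, S j.succ) × (∀ j : Fin k, S j.succ)) |
          ∀ t : Finset (Fin k),
            (Fin.cons q.1 (fun j => if j ∈ t then q.2.1 j else q.2.2 j) : ∀ i, S i) ∈ E}
          = ⋂ t : Finset (Fin k),
            (fun q : S 0 × ((∀ j : Fin k, S j.succ) × (∀ j : Fin k, S j.succ)) =>
              (Fin.cons q.1 (fun j => if j ∈ t then q.2.1 j else q.2.2 j) : ∀ i, S i)) ⁻¹' E := by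
        ext q; simp [Set.mem_iInter]
      rw [heq]
      exact MeasurableSet.iInter fun t =>
        (my_meas_cons measurable_fst (fun j => (hmixmeas t j).comp measurable_snd)) hE
    have hD3 : MeasurableSet {r : (S 0 × S 0) ×
        ((∀ j : Fin k, S j.succ) × (∀ j : Fin k, S j.succ)) |
        ∀ t : Finset (Fin k),
          (Fin.cons r.1.1 (fun j => if j ∈ t then r.2.1 j else r.2.2 j) : ∀ i, S i) ∈ E ∧
          (Fin.cons r.1.2 (fun j => if j ∈ t then r.2.1 j else r.2.2 j) : ∀ i, S i) ∈ E} := by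
      have heq : {r : (S 0 × S 0) × ((∀ j : Fin k, S j.succ) × (∀ j : Fin k, S j.succ)) |
          ∀ t : Finset (Fin k),
            (Fin.cons r.1.1 (fun j => if j ∈ t then r.2.1 j else r.2.2 j) : ∀ i, S i) ∈ E ∧
            (Fin.cons r.1.2 (fun j => if j ∈ t then r.2.1 j else r.2.2 j) : ∀ i, S i) ∈ E}
          = ⋂ t : Finset (Fin k),
            ((fun r : (S 0 × S 0) × ((∀ j : Fin k, S j.succ) × (∀ j : Fin k, S j.succ)) =>
              (Fin.cons r.1.1 (fun j => if j ∈ t then r.2.1 j else r.2.2 j) : ∀ i, S i)) ⁻¹' E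
            ∩ (fun r : (S 0 × S 0) × ((∀ j : Fin k, S j.succ) × (∀ j : Fin k, S j.succ)) =>
              (Fin.cons r.1.2 (fun j => if j ∈ t then r.2.1 j else r.2.2 j) : ∀ i, S i)) ⁻¹' E) := by
        ext r; simp [Set.mem_iInter, forall_and]
      rw [heq]
      refine MeasurableSet.iInter fun t => MeasurableSet.inter ?_ ?_
      · exact (my_meas_cons (measurable_fst.comp measurable_fst)
          (fun j => (hmixmeas t j).comp measurable_snd)) hE
      · exact (my_meas_cons (measurable_snd.comp measurable_fst)
          (fun j => (hmixmeas t j).comp measurable_snd)) hE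
    -- the equivalence
    have he : MeasurePreserving (MeasurableEquiv.piFinSuccAbove S 0) (Measure.pi ν)
        ((ν 0).prod (Measure.pi fun j : Fin k => ν j.succ)) :=
      measurePreserving_piFinSuccAbove ν 0
    have hPE : Measure.pi ν E
        = ((ν 0).prod (Measure.pi fun j : Fin k => ν j.succ))
          {p : S 0 × (∀ j : Fin k, S j.succ) | (Fin.cons p.1 p.2 : ∀ i, S i) ∈ E} := by
      have hEV : E = (MeasurableEquiv.piFinSuccAbove S 0) ⁻¹'
          {p : S 0 × (∀ j : Fin k, S j.succ) | (Fin.cons p.1 p.2 : ∀ i, S i) ∈ E} := by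
        ext f
        rw [Set.mem_preimage]
        show f ∈ E ↔ (Fin.cons (f 0) (fun j : Fin k => f j.succ) : ∀ i, S i) ∈ E
        rw [my_cons_self]
      nth_rewrite 1 [hEV]
      exact he.measure_preimage hV.nullMeasurableSet
    have hppc := my_measurePreserving_pppc (ν 0) (Measure.pi fun j : Fin k => ν j.succ)
      (ν 0) (Measure.pi fun j : Fin k => ν j.succ)
    have hee := he.prod he
    have hD : ((Measure.pi ν).prod (Measure.pi ν))
        {p : (∀ i, S i) × (∀ i, S i) |
          ∀ s : Finset (Fin (k + 1)), (fun i => if i ∈ s then p.1 i else p.2 i) ∈ E}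
        = (((ν 0).prod (ν 0)).prod
            ((Measure.pi fun j : Fin k => ν j.succ).prod (Measure.pi fun j : Fin k => ν j.succ)))
          {r : (S 0 × S 0) × ((∀ j : Fin k, S j.succ) × (∀ j : Fin k, S j.succ)) |
            ∀ t : Finset (Fin k),
              (Fin.cons r.1.1 (fun j => if j ∈ t then r.2.1 j else r.2.2 j) : ∀ i, S i) ∈ E ∧
              (Fin.cons r.1.2 (fun j => if j ∈ t then r.2.1 j else r.2.2 j) : ∀ i, S i) ∈ E} := by
      have hDpre : {p : (∀ i, S i) × (∀ i, S i) |
          ∀ s : Finset (Fin (k + 1)), (fun i => if i ∈ s then p.1 i else p.2 i) ∈ E}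
          = (Prod.map (MeasurableEquiv.piFinSuccAbove S 0) (MeasurableEquiv.piFinSuccAbove S 0)) ⁻¹'
            ((fun q : (S 0 × (∀ j : Fin k, S j.succ)) × (S 0 × (∀ j : Fin k, S j.succ)) =>
                ((q.1.1, q.2.1), (q.1.2, q.2.2))) ⁻¹'
              {r : (S 0 × S 0) × ((∀ j : Fin k, S j.succ) × (∀ j : Fin k, S j.succ)) |
                ∀ t : Finset (Fin k),
                  (Fin.cons r.1.1 (fun j => if j ∈ t then r.2.1 j else r.2.2 j) : ∀ i, S i) ∈ E ∧
                  (Fin.cons r.1.2 (fun j => if j ∈ t then r.2.1 j else r.2.2 j) : ∀ i, S i) ∈ E}) := by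
        ext p
        simp only [Set.mem_preimage, Set.mem_setOf_eq, Prod.map]
        exact my_split_iff E p.1 p.2
      rw [hDpre]
      exact (hee.measure_preimage ((hppc.measurable hD3).nullMeasurableSet)).trans
        (hppc.measure_preimage hD3.nullMeasurableSet)
    -- the function w ↦ ν 0 of the slice
    have hgm : Measurable (fun w : (∀ j : Fin k, S j.succ) × (∀ j : Fin k, S j.succ) =>
        (ν 0) ((fun y => (y, w)) ⁻¹'
          {q : S 0 × ((∀ j : Fin k, S j.succ) × (∀ j : Fin k, S j.succ)) |
            ∀ t : Finset (Fin k),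
              (Fin.cons q.1 (fun j => if j ∈ t then q.2.1 j else q.2.2 j) : ∀ i, S i) ∈ E})) :=
      measurable_measure_prodMk_right hW
    have hB : (((ν 0).prod (ν 0)).prod
          ((Measure.pi fun j : Fin k => ν j.succ).prod (Measure.pi fun j : Fin k => ν j.succ)))
          {r : (S 0 × S 0) × ((∀ j : Fin k, S j.succ) × (∀ j : Fin k, S j.succ)) |
            ∀ t : Finset (Fin k),
              (Fin.cons r.1.1 (fun j => if j ∈ t then r.2.1 j else r.2.2 j) : ∀ i, S i) ∈ E ∧
              (Fin.cons r.1.2 (fun j => if j ∈ t then r.2.1 j else r.2.2 j) : ∀ i, S i) ∈ E}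
        = ∫⁻ w, ((ν 0) ((fun y => (y, w)) ⁻¹'
            {q : S 0 × ((∀ j : Fin k, S j.succ) × (∀ j : Fin k, S j.succ)) |
              ∀ t : Finset (Fin k),
                (Fin.cons q.1 (fun j => if j ∈ t then q.2.1 j else q.2.2 j) : ∀ i, S i) ∈ E})) ^ 2
            ∂((Measure.pi fun j : Fin k => ν j.succ).prod (Measure.pi fun j : Fin k => ν j.succ)) := by
      rw [Measure.prod_apply_symm hD3]
      refine lintegral_congr fun w => ?_
      have hslice : (fun z : S 0 × S 0 => (z, w)) ⁻¹'
          {r : (S 0 × S 0) × ((∀ j : Fin k, S j.succ) × (∀ j : Fin k, S j.succ)) |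
            ∀ t : Finset (Fin k),
              (Fin.cons r.1.1 (fun j => if j ∈ t then r.2.1 j else r.2.2 j) : ∀ i, S i) ∈ E ∧
              (Fin.cons r.1.2 (fun j => if j ∈ t then r.2.1 j else r.2.2 j) : ∀ i, S i) ∈ E}
          = ((fun y => (y, w)) ⁻¹'
              {q : S 0 × ((∀ j : Fin k, S j.succ) × (∀ j : Fin k, S j.succ)) |
                ∀ t : Finset (Fin k),
                  (Fin.cons q.1 (fun j => if j ∈ t then q.2.1 j else q.2.2 j) : ∀ i, S i) ∈ E}) ×ˢ
            ((fun y => (y, w)) ⁻¹'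
              {q : S 0 × ((∀ j : Fin k, S j.succ) × (∀ j : Fin k, S j.succ)) |
                ∀ t : Finset (Fin k),
                  (Fin.cons q.1 (fun j => if j ∈ t then q.2.1 j else q.2.2 j) : ∀ i, S i) ∈ E}) := by
        ext z
        simp only [Set.mem_preimage, Set.mem_setOf_eq, Set.mem_prod, forall_and]
      rw [hslice, Measure.prod_prod, pow_two]
    have h5 : Measure.pi ν E ^ 2 ^ k ≤
        ∫⁻ w, ((ν 0) ((fun y => (y, w)) ⁻¹'
            {q : S 0 × ((∀ j : Fin k, S j.succ) × (∀ j : Fin k, S j.succ)) |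
              ∀ t : Finset (Fin k),
                (Fin.cons q.1 (fun j => if j ∈ t then q.2.1 j else q.2.2 j) : ∀ i, S i) ∈ E}))
          ∂((Measure.pi fun j : Fin k => ν j.succ).prod (Measure.pi fun j : Fin k => ν j.succ)) := by
      rw [hPE, Measure.prod_apply hV]
      calc (∫⁻ y, (Measure.pi fun j : Fin k => ν j.succ)
              (Prod.mk y ⁻¹' {p : S 0 × (∀ j : Fin k, S j.succ) |
                (Fin.cons p.1 p.2 : ∀ i, S i) ∈ E}) ∂(ν 0)) ^ 2 ^ k
          ≤ ∫⁻ y, ((Measure.pi fun j : Fin k => ν j.succ)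
              (Prod.mk y ⁻¹' {p : S 0 × (∀ j : Fin k, S j.succ) |
                (Fin.cons p.1 p.2 : ∀ i, S i) ∈ E})) ^ 2 ^ k ∂(ν 0) :=
            my_pow_lintegral_le _ (measurable_measure_prodMk_left hV) k
        _ ≤ ∫⁻ y, ((Measure.pi fun j : Fin k => ν j.succ).prod
              (Measure.pi fun j : Fin k => ν j.succ))
              (Prod.mk y ⁻¹'
                {q : S 0 × ((∀ j : Fin k, S j.succ) × (∀ j : Fin k, S j.succ)) |
                  ∀ t : Finset (Fin k),
                    (Fin.cons q.1 (fun j => if j ∈ t then q.2.1 j else q.2.2 j) : ∀ i, S i) ∈ E})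
              ∂(ν 0) := by
            refine lintegral_mono fun y => ?_
            exact ih (fun j => S j.succ) (fun j => ν j.succ)
              (Prod.mk y ⁻¹' {p : S 0 × (∀ j : Fin k, S j.succ) |
                (Fin.cons p.1 p.2 : ∀ i, S i) ∈ E})
              (measurable_prodMk_left hV)
        _ = ((ν 0).prod ((Measure.pi fun j : Fin k => ν j.succ).prod
              (Measure.pi fun j : Fin k => ν j.succ)))
              {q : S 0 × ((∀ j : Fin k, S j.succ) × (∀ j : Fin k, S j.succ)) |
                ∀ t : Finset (Fin k),
                  (Fin.cons q.1 (fun j => if j ∈ t then q.2.1 j else q.2.2 j) : ∀ i, S i) ∈ E} :=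
            (Measure.prod_apply hW).symm
        _ = ∫⁻ w, ((ν 0) ((fun y => (y, w)) ⁻¹'
              {q : S 0 × ((∀ j : Fin k, S j.succ) × (∀ j : Fin k, S j.succ)) |
                ∀ t : Finset (Fin k),
                  (Fin.cons q.1 (fun j => if j ∈ t then q.2.1 j else q.2.2 j) : ∀ i, S i) ∈ E}))
              ∂((Measure.pi fun j : Fin k => ν j.succ).prod
                (Measure.pi fun j : Fin k => ν j.succ)) :=
            Measure.prod_apply_symm hW
    calc Measure.pi ν E ^ 2 ^ (k + 1)
        = (Measure.pi ν E ^ 2 ^ k) ^ 2 := by rw [← pow_mul, pow_succ]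
      _ ≤ (∫⁻ w, ((ν 0) ((fun y => (y, w)) ⁻¹'
            {q : S 0 × ((∀ j : Fin k, S j.succ) × (∀ j : Fin k, S j.succ)) |
              ∀ t : Finset (Fin k),
                (Fin.cons q.1 (fun j => if j ∈ t then q.2.1 j else q.2.2 j) : ∀ i, S i) ∈ E}))
            ∂((Measure.pi fun j : Fin k => ν j.succ).prod
              (Measure.pi fun j : Fin k => ν j.succ))) ^ 2 := pow_le_pow_left' h5 2
      _ ≤ ∫⁻ w, ((ν 0) ((fun y => (y, w)) ⁻¹'
            {q : S 0 × ((∀ j : Fin k, S j.succ) × (∀ j : Fin k, S j.succ)) |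
              ∀ t : Finset (Fin k),
                (Fin.cons q.1 (fun j => if j ∈ t then q.2.1 j else q.2.2 j) : ∀ i, S i) ∈ E})) ^ 2
            ∂((Measure.pi fun j : Fin k => ν j.succ).prod
              (Measure.pi fun j : Fin k => ν j.succ)) :=
          my_sq_lintegral_le _ hgm.aemeasurable
      _ = _ := by rw [← hB, ← hD]

lemma my_joint_law {Ω : Type*} [MeasurableSpace Ω] (μ : Measure Ω) [IsProbabilityMeasure μ]
    {ι : Type*} [Fintype ι] {β : ι → Type*} [m : ∀ i, MeasurableSpace (β i)]
    (f : ∀ i, Ω → β i) (hf : ∀ i, Measurable (f i)) (hind : iIndepFun f μ) :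
    Measure.pi (fun i => μ.map (f i)) = μ.map (fun ω i => f i ω) := by
  haveI : ∀ i, IsProbabilityMeasure (μ.map (f i)) :=
    fun i => Measure.isProbabilityMeasure_map (hf i).aemeasurable
  refine Measure.pi_eq fun s hs => ?_
  rw [Measure.map_apply (measurable_pi_lambda _ hf) (MeasurableSet.univ_pi hs)]
  have hpre : (fun ω i => f i ω) ⁻¹' Set.pi Set.univ s = ⋂ i ∈ Finset.univ, f i ⁻¹' s i := by
    ext ω; simp [Set.mem_pi]
  rw [hpre, hind.measure_inter_preimage_eq_mul Finset.univ (fun i _ => hs i)]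
  exact Finset.prod_congr rfl fun i _ => (Measure.map_apply (hf i) (hs i)).symm

theorem general_decoupling_lemma {Ω : Type*} [MeasurableSpace Ω] (μ : MeasureTheory.Measure Ω)
    [IsProbabilityMeasure μ] (k : ℕ) (S : Fin k → Type*) [mS : ∀ i, MeasurableSpace (S i)]
    (X X' : ∀ i, Ω → S i)
    (hX : ∀ i, Measurable (X i)) (hX' : ∀ i, Measurable (X' i))
    (hcopy : ∀ i, IdentDistrib (X i) (X' i) μ μ)
    (hindep : iIndepFun (β := Sum.elim S S)
      (m := fun p => Sum.casesOn (motive := fun p => MeasurableSpace (Sum.elim S S p)) p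
        (fun j => mS j) (fun j => mS j))
      (fun p => Sum.casesOn (motive := fun p => Ω → Sum.elim S S p) p
        (fun j => X j) (fun j => X' j)) μ)
    (E : Set (∀ i, S i)) (hE : MeasurableSet E) :
    μ {ω | (fun i => X i ω) ∈ E} ≤
      (μ {ω | ∀ s : Finset (Fin k), (fun i => if i ∈ s then X i ω else X' i ω) ∈ E})
        ^ ((1 : ℝ) / 2 ^ k) := by
  classical
  letI : ∀ p : Fin k ⊕ Fin k, MeasurableSpace (Sum.elim S S p) :=
    fun p => Sum.casesOn (motive := fun p => MeasurableSpace (Sum.elim S S p)) p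
      (fun j => mS j) (fun j => mS j)
  have hFm : ∀ p : Fin k ⊕ Fin k,
      Measurable (Sum.casesOn (motive := fun p => Ω → Sum.elim S S p) p
        (fun j => X j) (fun j => X' j)) := by
    rintro (j | j)
    · exact hX j
    · exact hX' j
  haveI : ∀ i : Fin k, IsProbabilityMeasure (μ.map (X i)) :=
    fun i => Measure.isProbabilityMeasure_map (hX i).aemeasurable
  have hlaw := my_joint_law (m := fun p => Sum.casesOn
      (motive := fun p => MeasurableSpace (Sum.elim S S p)) p (fun j => mS j) (fun j => mS j))
    μ _ hFm hindep
  have hσ := measurePreserving_sumPiEquivProdPi (X := Sum.elim S S)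
    (fun p => μ.map (Sum.casesOn (motive := fun p => Ω → Sum.elim S S p) p
      (fun j => X j) (fun j => X' j)))
  have hP2 : (Measure.pi fun i : Fin k => μ.map (Sum.casesOn
        (motive := fun p => Ω → Sum.elim S S p) (Sum.inr i) (fun j => X j) (fun j => X' j)))
      = Measure.pi fun i : Fin k => μ.map (X i) := by
    congr 1
    funext i
    exact ((hcopy i).map_eq).symm
  have hJm : Measurable (fun ω (p : Fin k ⊕ Fin k) =>
      Sum.casesOn (motive := fun p => Ω → Sum.elim S S p) p
        (fun j => X j) (fun j => X' j) ω) := measurable_pi_lambda _ hFm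
  have key : ∀ A : Set ((∀ i, S i) × (∀ i, S i)), MeasurableSet A →
      μ ((fun ω (p : Fin k ⊕ Fin k) =>
          Sum.casesOn (motive := fun p => Ω → Sum.elim S S p) p
            (fun j => X j) (fun j => X' j) ω) ⁻¹'
        ((MeasurableEquiv.sumPiEquivProdPi (Sum.elim S S)) ⁻¹' A))
      = ((Measure.pi fun i : Fin k => μ.map (X i)).prod
          (Measure.pi fun i : Fin k => μ.map (X i))) A := by
    intro A hA
    rw [← Measure.map_apply hJm
      ((MeasurableEquiv.sumPiEquivProdPi (Sum.elim S S)).measurable hA), ← hlaw,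
      hσ.measure_preimage hA.nullMeasurableSet, hP2]
    exact rfl
  -- the two events
  have hA2 : MeasurableSet {p : (∀ i, S i) × (∀ i, S i) |
      ∀ s : Finset (Fin k), (fun i => if i ∈ s then p.1 i else p.2 i) ∈ E} := by
    have heq : {p : (∀ i, S i) × (∀ i, S i) |
        ∀ s : Finset (Fin k), (fun i => if i ∈ s then p.1 i else p.2 i) ∈ E}
        = ⋂ s : Finset (Fin k), (fun p : (∀ i, S i) × (∀ i, S i) =>
            fun i => if i ∈ s then p.1 i else p.2 i) ⁻¹' E := by
      ext p; simp [Set.mem_iInter]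
    rw [heq]
    refine MeasurableSet.iInter fun s => ?_
    refine (measurable_pi_lambda _ fun i => ?_) hE
    by_cases hi : i ∈ s
    · simp only [hi, ↓reduceIte]; exact (measurable_pi_apply i).comp (measurable_fst :
        Measurable fun p : (∀ i, S i) × (∀ i, S i) => p.1)
    · simp only [hi, ↓reduceIte]; exact (measurable_pi_apply i).comp (measurable_snd :
        Measurable fun p : (∀ i, S i) × (∀ i, S i) => p.2)
  have hA1 : MeasurableSet {p : (∀ i, S i) × (∀ i, S i) | p.1 ∈ E} := measurable_fst hE
  have hL : μ {ω | (fun i => X i ω) ∈ E}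
      = ((Measure.pi fun i : Fin k => μ.map (X i)).prod
          (Measure.pi fun i : Fin k => μ.map (X i)))
        {p : (∀ i, S i) × (∀ i, S i) | p.1 ∈ E} := key _ hA1
  have hR : μ {ω | ∀ s : Finset (Fin k), (fun i => if i ∈ s then X i ω else X' i ω) ∈ E}
      = ((Measure.pi fun i : Fin k => μ.map (X i)).prod
          (Measure.pi fun i : Fin k => μ.map (X i)))
        {p : (∀ i, S i) × (∀ i, S i) |
          ∀ s : Finset (Fin k), (fun i => if i ∈ s then p.1 i else p.2 i) ∈ E} := key _ hA2
  have hA1E : {p : (∀ i, S i) × (∀ i, S i) | p.1 ∈ E} = E ×ˢ (Set.univ : Set (∀ i, S i)) := by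
    ext p; simp
  rw [hL, hR, hA1E, Measure.prod_prod, measure_univ, mul_one]
  have hcore := my_core k S (fun i => μ.map (X i)) E hE
  calc (Measure.pi fun i : Fin k => μ.map (X i)) E
      = (((Measure.pi fun i : Fin k => μ.map (X i)) E) ^ (2 ^ k : ℕ)) ^ ((1 : ℝ) / 2 ^ k) := by
        rw [← ENNReal.rpow_natCast _ (2 ^ k), ← ENNReal.rpow_mul,
          show (((2 ^ k : ℕ) : ℝ) * ((1 : ℝ) / 2 ^ k)) = 1 by push_cast; field_simp,
          ENNReal.rpow_one]
    _ ≤ _ := ENNReal.rpow_le_rpow hcore (by positivity)
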